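/- Let M be a finitely generated ℤ-module and ‖·‖ a norm on M_ℝ := M ⊗_ℤ ℝ. For λ ≥ 0, with ĥ⁰(M, ‖·‖) := log #{x ∈ M : ‖x‖ ≤ 1}, we have ĥ⁰(M, e^{−λ}‖·‖) ≤ ĥ⁰(M, ‖·‖) + λ·rk M + (log 3)·rk M. -/

import Mathlib

open TensorProduct

private theorem stmt7_count (G : Type*) [AddCommGroup G] [Module.Finite ℤ G]
    (E : Type*) [NormedAddCommGroup E] [NormedSpace ℝ E]
    (g : G →ₗ[ℤ] E) (m : ℕ) (hm2 : 2 ≤ m) (R : ℝ) (hR : 1 ≤ R) (hmR : 2 * R ≤ m)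
    (hfin : {x : G | ‖g x‖ ≤ R}.Finite) :
    Nat.card {x : G | ‖g x‖ ≤ R} ≤
      m ^ (Module.finrank ℤ G) * Nat.card {x : G | ‖g x‖ ≤ 1} := by
  classical
  haveI : NoZeroSMulDivisors ℤ E := by
    refine ⟨fun {n x} h => ?_⟩
    rcases eq_or_ne n 0 with rfl | hn
    · exact Or.inl rfl
    · refine Or.inr ?_
      have h' : (n : ℝ) • x = 0 := by rw [Int.cast_smul_eq_zsmul]; exact h
      have : (n : ℝ) ≠ 0 := by exact_mod_cast hn
      simpa [this] using (smul_eq_zero.mp h')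
  set L := LinearMap.range g with hL
  haveI : Module.Finite ℤ L := Module.Finite.range g
  haveI : Module.Free ℤ L := Module.free_of_finite_type_torsion_free'
  set ι := Module.Free.ChooseBasisIndex ℤ L
  set b : Module.Basis ι ℤ L := Module.Free.chooseBasis ℤ L
  have hcard : Fintype.card ι ≤ Module.finrank ℤ G := by
    rw [← Module.finrank_eq_card_chooseBasisIndex]
    exact LinearMap.finrank_range_le g
  have hmpos : (0:ℝ) < m := by positivity
  have hmne : (m:ℝ) ≠ 0 := ne_of_gt hmpos
  set S : Set G := {x : G | ‖g x‖ ≤ R} with hS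
  set S₁ : Set G := {x : G | ‖g x‖ ≤ 1} with hS₁
  set K : Set G := {x : G | g x = 0} with hK
  have hS₁S : S₁ ⊆ S := fun x hx => le_trans hx hR
  have hfinS₁ : S₁.Finite := hfin.subset hS₁S
  have hfinK : K.Finite := hfinS₁.subset (fun x hx => by
    show ‖g x‖ ≤ 1
    rw [show g x = 0 from hx]; simp)
  -- mod-m coordinates
  set φ : G → ι → ZMod m :=
    fun x i => ((b.repr ⟨g x, LinearMap.mem_range_self g x⟩ i : ℤ) : ZMod m) with hφ
  set rep : (ι → ZMod m) → G :=
    fun c => if h : ∃ y, y ∈ S ∧ φ y = c then h.choose else 0 with hrep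
  have hrep_spec : ∀ x ∈ S, rep (φ x) ∈ S ∧ φ (rep (φ x)) = φ x := by
    intro x hx
    have h : ∃ y, y ∈ S ∧ φ y = φ x := ⟨x, hx, rfl⟩
    simp only [hrep, dif_pos h]
    exact h.choose_spec
  set sec : E → G := fun v => if h : ∃ y, g y = v then h.choose else 0 with hsec
  have hsec_spec : ∀ v : E, (∃ y, g y = v) → g (sec v) = v := by
    intro v h
    simp only [hsec, dif_pos h]
    exact h.choose_spec
  -- key divisibility/size step
  have key : ∀ x ∈ S, (m:ℝ)⁻¹ • (g x - g (rep (φ x))) ∈ g '' S₁ := by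
    intro x hx
    obtain ⟨hyS, hyφ⟩ := hrep_spec x hx
    set y := rep (φ x)
    set u : L := ⟨g x, LinearMap.mem_range_self g x⟩ with hu
    set u' : L := ⟨g y, LinearMap.mem_range_self g y⟩ with hu'
    have hdvd : ∀ i, (m:ℤ) ∣ (b.repr (u - u')) i := by
      intro i
      have h0 : ((b.repr (u - u') i : ℤ) : ZMod m) = 0 := by
        rw [map_sub, Finsupp.sub_apply]
        push_cast
        have := congrFun hyφ i
        simp only [hφ] at this
        rw [sub_eq_zero]
        exact this.symm
      exact (ZMod.intCast_zmod_eq_zero_iff_dvd _ _).mp h0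
    set w : L := ∑ i, ((b.repr (u - u')) i / m) • b i with hw
    have hmw : (m:ℤ) • w = u - u' := by
      rw [hw, Finset.smul_sum]
      rw [show (∑ i, (m:ℤ) • ((b.repr (u - u') i / m) • b i)) =
          ∑ i, (b.repr (u - u') i) • b i from
        Finset.sum_congr rfl (fun i _ => by
          rw [smul_smul, Int.mul_ediv_cancel' (hdvd i)])]
      exact b.sum_repr (u - u')
    obtain ⟨z, hz⟩ := LinearMap.mem_range.mp w.2
    -- (m:ℝ) • g z = g x - g y
    have hsmul : (m:ℝ) • g z = g x - g y := by
      have h1 : (((m:ℤ) • w : L) : E) = g x - g y := by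
        rw [hmw]; rfl
      rw [← h1]
      push_cast [Submodule.coe_smul]
      rw [← Int.cast_smul_eq_zsmul ℝ (m:ℤ) ((w:L) : E)]
      push_cast
      rw [hz]
    have hnz : ‖g z‖ ≤ 1 := by
      have h2 : ‖g x - g y‖ ≤ 2 * R := by
        have := norm_sub_le (g x) (g y)
        have hx' : ‖g x‖ ≤ R := hx
        have hy' : ‖g y‖ ≤ R := hyS
        linarith
      have h3 : (m:ℝ) * ‖g z‖ = ‖g x - g y‖ := by
        rw [← hsmul, norm_smul, Real.norm_eq_abs, abs_of_pos hmpos]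
      nlinarith
    refine ⟨z, hnz, ?_⟩
    rw [← hsmul, inv_smul_smul₀ hmne]
  -- the injection
  haveI : NeZero m := ⟨by omega⟩
  haveI : Finite ↥S := hfin.to_subtype
  haveI : Finite ↥(g '' S₁) := (hfinS₁.image _).to_subtype
  haveI : Finite ↥K := hfinK.to_subtype
  set Φ : ↥S → (ι → ZMod m) × ↥(g '' S₁) × ↥K :=
    fun x => (φ x, ⟨(m:ℝ)⁻¹ • (g x - g (rep (φ x))), key x x.2⟩,
      ⟨(x : G) - sec (g x), by
        show g ((x:G) - sec (g x)) = 0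
        rw [map_sub, hsec_spec (g x) ⟨x, rfl⟩, sub_self]⟩) with hΦ
  have hΦinj : Function.Injective Φ := by
    intro x x' hxx
    simp only [hΦ, Prod.mk.injEq, Subtype.mk.injEq] at hxx
    obtain ⟨h1, h2, h3⟩ := hxx
    rw [h1] at h2
    have h2' : g ↑x - g (rep (φ ↑x')) = g ↑x' - g (rep (φ ↑x')) :=
      smul_right_injective E (inv_ne_zero hmne) h2
    have hgx : g (x:G) = g x' := sub_left_inj.mp h2'
    rw [hgx] at h3
    exact Subtype.ext (sub_left_inj.mp h3)
  -- the fiber decomposition of S₁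
  have e₁ : ↥S₁ ≃ ↥(⇑g '' S₁) × ↥K :=
    { toFun := fun y => (⟨g y, ⟨(y:G), y.2, rfl⟩⟩,
        ⟨(y:G) - sec (g y), by
          show g ((y:G) - sec (g y)) = 0
          rw [map_sub, hsec_spec (g y) ⟨y, rfl⟩, sub_self]⟩)
      invFun := fun p => ⟨sec (p.1:E) + (p.2:G), by
        obtain ⟨yy, hyy, hgyy⟩ := p.1.2
        show ‖g (sec (p.1:E) + (p.2:G))‖ ≤ 1
        rw [map_add, hsec_spec (p.1:E) ⟨yy, hgyy⟩, show g (p.2:G) = 0 from p.2.2,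
          add_zero, ← hgyy]
        exact hyy⟩
      left_inv := fun y => by
        apply Subtype.ext
        show sec (g y) + ((y:G) - sec (g y)) = (y:G)
        abel
      right_inv := fun p => by
        obtain ⟨yy, hyy, hgyy⟩ := p.1.2
        have hg1 : g (sec (p.1:E) + (p.2:G)) = (p.1:E) := by
          rw [map_add, hsec_spec (p.1:E) ⟨yy, hgyy⟩, show g (p.2:G) = 0 from p.2.2, add_zero]
        ext
        · exact hg1
        · show sec (p.1:E) + (p.2:G) - sec (g (sec (p.1:E) + (p.2:G))) = (p.2:G)
          rw [hg1]; abel }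
  have hpi : Nat.card (ι → ZMod m) = m ^ Fintype.card ι := by
    simp [Nat.card_eq_fintype_card, ZMod.card]
  have hS₁card : Nat.card ↥S₁ = Nat.card ↥(⇑g '' S₁) * Nat.card ↥K := by
    rw [Nat.card_congr e₁, Nat.card_prod]
  calc Nat.card ↥S ≤ Nat.card ((ι → ZMod m) × ↥(⇑g '' S₁) × ↥K) :=
        Nat.card_le_card_of_injective Φ hΦinj
    _ = m ^ Fintype.card ι * Nat.card ↥S₁ := by
        rw [Nat.card_prod, Nat.card_prod, hpi, hS₁card]
    _ ≤ m ^ Module.finrank ℤ G * Nat.card ↥S₁ :=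
        Nat.mul_le_mul_right _ (Nat.pow_le_pow_right (by omega) hcard)

private theorem stmt7_log_nat_nonneg (n : ℕ) : 0 ≤ Real.log n := by
  rcases Nat.eq_zero_or_pos n with h | h
  · simp [h]
  · exact Real.log_nonneg (by exact_mod_cast h)

/-- Let `M` be a finitely generated `ℤ`-module and `‖·‖` a norm on
`M_ℝ = ℝ ⊗_ℤ M` (realized as a normed real vector space `E` via a linear isomorphism `e`).
For `λ ≥ 0`, with `ĥ⁰(M, ‖·‖) = log #{x ∈ M : ‖x‖ ≤ 1}`, one has
`ĥ⁰(M, e^{−λ}‖·‖) ≤ ĥ⁰(M, ‖·‖) + λ·rk M + (log 3)·rk M`; note that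
`ĥ⁰(M, e^{−λ}‖·‖) = log #{x ∈ M : ‖x‖ ≤ e^λ}`. -/
theorem stmt7 (M : Type*) [AddCommGroup M] [Module.Finite ℤ M]
    (E : Type*) [NormedAddCommGroup E] [NormedSpace ℝ E]
    (e : (ℝ ⊗[ℤ] M) ≃ₗ[ℝ] E)
    (lam : ℝ) (hlam : 0 ≤ lam) :
    Real.log (Nat.card {x : M | ‖e ((1 : ℝ) ⊗ₜ[ℤ] x)‖ ≤ Real.exp lam}) ≤
      Real.log (Nat.card {x : M | ‖e ((1 : ℝ) ⊗ₜ[ℤ] x)‖ ≤ 1})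
        + lam * Module.finrank ℤ M + Real.log 3 * Module.finrank ℤ M := by

  classical
  set g : M →ₗ[ℤ] E :=
    (e.toLinearMap.restrictScalars ℤ).comp ((TensorProduct.mk ℤ ℝ M) 1) with hg
  have hgx : ∀ x : M, e ((1 : ℝ) ⊗ₜ[ℤ] x) = g x := fun x => rfl
  simp only [hgx]
  set R : ℝ := Real.exp lam with hRdef
  have hR : 1 ≤ R := Real.one_le_exp hlam
  set r : ℕ := Module.finrank ℤ M with hr
  have hlog3 : 0 ≤ Real.log 3 := Real.log_nonneg (by norm_num)
  by_cases hfin : {x : M | ‖g x‖ ≤ R}.Finite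
  · -- finite case
    set m : ℕ := ⌈2 * R⌉₊ with hm
    have hmR : 2 * R ≤ m := Nat.le_ceil _
    have hm2 : 2 ≤ m := by
      have : (2:ℝ) ≤ m := le_trans (by linarith) hmR
      exact_mod_cast Nat.ofNat_le_cast.mp this
    have hm3R : (m:ℝ) ≤ 3 * R := by
      have := Nat.ceil_lt_add_one (show (0:ℝ) ≤ 2 * R by linarith)
      linarith
    have hcount := stmt7_count M E g m hm2 R hR hmR hfin
    have hfinS₁ : {x : M | ‖g x‖ ≤ 1}.Finite :=
      hfin.subset (fun x hx => le_trans hx hR)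
    haveI : Finite ↥{x : M | ‖g x‖ ≤ R} := hfin.to_subtype
    haveI : Finite ↥{x : M | ‖g x‖ ≤ 1} := hfinS₁.to_subtype
    haveI : Nonempty ↥{x : M | ‖g x‖ ≤ R} := ⟨⟨0, by simp; linarith⟩⟩
    haveI : Nonempty ↥{x : M | ‖g x‖ ≤ 1} := ⟨⟨0, by simp⟩⟩
    have hc1 : 0 < Nat.card {x : M | ‖g x‖ ≤ R} := Nat.card_pos
    have hc2 : 0 < Nat.card {x : M | ‖g x‖ ≤ 1} := Nat.card_pos
    have hmpos : (0:ℝ) < m := by positivity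
    have step1 : Real.log (Nat.card {x : M | ‖g x‖ ≤ R}) ≤
        Real.log ((m:ℝ) ^ r * Nat.card {x : M | ‖g x‖ ≤ 1}) := by
      apply Real.log_le_log (by exact_mod_cast hc1)
      calc (Nat.card {x : M | ‖g x‖ ≤ R} : ℝ)
          ≤ ((m ^ r * Nat.card {x : M | ‖g x‖ ≤ 1} : ℕ) : ℝ) := by exact_mod_cast hcount
        _ = (m:ℝ) ^ r * Nat.card {x : M | ‖g x‖ ≤ 1} := by push_cast; ring
    have step2 : Real.log ((m:ℝ) ^ r * Nat.card {x : M | ‖g x‖ ≤ 1}) =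
        r * Real.log m + Real.log (Nat.card {x : M | ‖g x‖ ≤ 1}) := by
      rw [Real.log_mul (by positivity) (by exact_mod_cast hc2.ne'), Real.log_pow]
    have step3 : Real.log (m:ℝ) ≤ Real.log 3 + lam := by
      have h1 : Real.log (m:ℝ) ≤ Real.log (3 * R) :=
        Real.log_le_log hmpos hm3R
      rw [Real.log_mul (by norm_num) (by positivity), hRdef, Real.log_exp] at h1
      exact h1
    have hr0 : (0:ℝ) ≤ r := by positivity
    calc Real.log (Nat.card {x : M | ‖g x‖ ≤ R})
        ≤ r * Real.log m + Real.log (Nat.card {x : M | ‖g x‖ ≤ 1}) := by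
          rw [← step2]; exact step1
      _ ≤ r * (Real.log 3 + lam) + Real.log (Nat.card {x : M | ‖g x‖ ≤ 1}) := by
          have := mul_le_mul_of_nonneg_left step3 hr0
          linarith
      _ ≤ Real.log (Nat.card {x : M | ‖g x‖ ≤ 1}) + lam * r + Real.log 3 * r := by
          ring_nf; linarith
  · -- infinite case
    haveI := (Set.infinite_coe_iff.mpr hfin)
    rw [Nat.card_eq_zero_of_infinite]
    simp only [Nat.cast_zero, Real.log_zero]
    have h1 : 0 ≤ Real.log (Nat.card {x : M | ‖g x‖ ≤ 1}) := stmt7_log_nat_nonneg _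
    have h2 : 0 ≤ lam * r := by positivity
    have h3 : 0 ≤ Real.log 3 * r := by positivity
    linarith
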